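/- Let X be a nonempty compact metric space, T : X → X a continuous map, and φ : X → ℝ a continuous function. Assume that ∫_X φ dμ < 0 for every T-invariant Borel probability measure μ on X (invariance meaning μ(T^{-1} S) = μ(S) for every Borel set S). Then there exist ε > 0 and N ∈ ℕ such that for every x ∈ X and every integer n ≥ N, the Birkhoff sum satisfies ∑_{i=0}^{n−1} φ(T^i x) ≤ −ε n. -/

import Mathlib

open MeasureTheory
open Filter Set Topology TopologicalSpace
open scoped NNReal ENNReal

theorem exists_neg_birkhoff
    (X : Type*) [MetricSpace X] [CompactSpace X] [Nonempty X]
    [MeasurableSpace X] [BorelSpace X]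
    (T : X → X) (hT : Continuous T)
    (φ : X → ℝ) (hφ : Continuous φ)
    (hneg : ∀ μ : Measure X, IsProbabilityMeasure μ →
      (∀ S : Set X, MeasurableSet S → μ (T ⁻¹' S) = μ S) →
      ∫ x, φ x ∂μ < 0) :
    ∃ m : ℕ, 0 < m ∧ ∀ y : X, ∑ i ∈ Finset.range m, φ (T^[i] y) < 0 := by
  classical
  by_contra hcon
  push_neg at hcon
  -- a sequence of points with nonnegative Birkhoff sums
  have hx : ∀ k : ℕ, ∃ y : X, 0 ≤ ∑ i ∈ Finset.range (k+1) , φ (T^[i] y) := by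
    intro k
    obtain ⟨y, hy⟩ := hcon (k+1) k.succ_pos
    exact ⟨y, hy⟩
  choose x hx using hx
  -- a bound for φ
  obtain ⟨z, -, hz⟩ := isCompact_univ.exists_isMaxOn univ_nonempty
    (continuous_abs.comp hφ).continuousOn
  rw [isMaxOn_iff] at hz
  set M : ℝ := |φ z| + 1 with hM
  have hMpos : 0 < M := by positivity
  have hφM : ∀ y, |φ y| ≤ M := fun y => (hz y (mem_univ y)).trans (by simp [hM])
  -- empirical averages
  set e : Set X → ℕ → ℝ :=
    fun A k => (∑ i ∈ Finset.range (k+1), A.indicator (fun _ => (1:ℝ)) (T^[i] (x k))) / (k+1)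
    with he
  have ind_nonneg : ∀ (A : Set X) y, 0 ≤ A.indicator (fun _ => (1:ℝ)) y := by
    intro A y; exact Set.indicator_nonneg (fun _ _ => zero_le_one) y
  have ind_le_one : ∀ (A : Set X) y, A.indicator (fun _ => (1:ℝ)) y ≤ 1 := by
    intro A y
    by_cases h : y ∈ A <;> simp [Set.indicator_of_mem, Set.indicator_of_notMem, h]
  have e_mem : ∀ (A : Set X) k, e A k ∈ Set.Icc (0:ℝ) 1 := by
    intro A k
    constructor
    · apply div_nonneg (Finset.sum_nonneg fun i _ => ind_nonneg A _) (by positivity)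
    · rw [div_le_one (by positivity)]
      calc ∑ i ∈ Finset.range (k+1), A.indicator (fun _ => (1:ℝ)) (T^[i] (x k))
          ≤ ∑ i ∈ Finset.range (k+1), 1 := Finset.sum_le_sum fun i _ => ind_le_one A _
        _ = (k+1 : ℝ) := by simp
  -- the ultrafilter and the limit set function
  set U : Ultrafilter ℕ := Ultrafilter.of atTop with hUdef
  have hUle : (U : Filter ℕ) ≤ atTop := Ultrafilter.of_le _
  have hulim : ∀ A : Set X, ∃ l ∈ Set.Icc (0:ℝ) 1, Tendsto (e A) U (𝓝 l) := by
    intro A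
    have hc : IsCompact (Set.Icc (0:ℝ) 1) := isCompact_Icc
    have hle : (Ultrafilter.map (e A) U : Filter ℝ) ≤ 𝓟 (Set.Icc 0 1) := by
      rw [Filter.le_principal_iff]
      exact Filter.mem_map.2 (Filter.univ_mem' (e_mem A))
    obtain ⟨l, hl, h⟩ := hc.ultrafilter_le_nhds (Ultrafilter.map (e A) U) hle
    exact ⟨l, hl, h⟩
  choose lam lam_mem lam_tendsto using hulim
  have lam_nonneg : ∀ A, 0 ≤ lam A := fun A => (lam_mem A).1
  -- basic properties of lam
  have lam_mono : ∀ A B : Set X, A ⊆ B → lam A ≤ lam B := by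
    intro A B hAB
    refine le_of_tendsto_of_tendsto (lam_tendsto A) (lam_tendsto B) ?_
    filter_upwards with k
    have : ∀ y, A.indicator (fun _ => (1:ℝ)) y ≤ B.indicator (fun _ => (1:ℝ)) y :=
      fun y => Set.indicator_le_indicator_of_subset hAB (fun _ => zero_le_one) y
    show (∑ i ∈ Finset.range (k+1), A.indicator (fun _ => (1:ℝ)) (T^[i] (x k))) / (k+1)
        ≤ (∑ i ∈ Finset.range (k+1), B.indicator (fun _ => (1:ℝ)) (T^[i] (x k))) / (k+1)
    gcongr with i hi
  have lam_union : ∀ A B : Set X, Disjoint A B → lam (A ∪ B) = lam A + lam B := by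
    intro A B hAB
    have hk : ∀ k, e (A ∪ B) k = e A k + e B k := by
      intro k
      show (∑ i ∈ Finset.range (k+1), (A ∪ B).indicator (fun _ => (1:ℝ)) (T^[i] (x k))) / (k+1)
          = (∑ i ∈ Finset.range (k+1), A.indicator (fun _ => (1:ℝ)) (T^[i] (x k))) / (k+1)
          + (∑ i ∈ Finset.range (k+1), B.indicator (fun _ => (1:ℝ)) (T^[i] (x k))) / (k+1)
      rw [← add_div, ← Finset.sum_add_distrib]
      congr 1
      refine Finset.sum_congr rfl fun i _ => ?_
      exact congrFun (Set.indicator_union_of_disjoint hAB _) _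
    refine tendsto_nhds_unique (lam_tendsto (A ∪ B)) ?_
    rw [tendsto_congr hk]
    exact (lam_tendsto A).add (lam_tendsto B)
  have lam_subadd : ∀ A B : Set X, lam (A ∪ B) ≤ lam A + lam B := by
    intro A B
    refine le_of_tendsto_of_tendsto (lam_tendsto (A ∪ B))
      ((lam_tendsto A).add (lam_tendsto B)) ?_
    filter_upwards with k
    have key : ∀ y, (A ∪ B).indicator (fun _ => (1:ℝ)) y
        ≤ A.indicator (fun _ => (1:ℝ)) y + B.indicator (fun _ => (1:ℝ)) y := by
      intro y
      by_cases hy : y ∈ A ∪ B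
      · rw [Set.indicator_of_mem hy]
        rcases hy with h | h
        · rw [Set.indicator_of_mem h]
          have := ind_nonneg B y
          linarith
        · rw [Set.indicator_of_mem h (f := fun _ => (1:ℝ))]
          have := ind_nonneg A y
          linarith
      · rw [Set.indicator_of_notMem hy]
        exact add_nonneg (ind_nonneg A y) (ind_nonneg B y)
    show (∑ i ∈ Finset.range (k+1), (A ∪ B).indicator (fun _ => (1:ℝ)) (T^[i] (x k))) / (k+1)
        ≤ (∑ i ∈ Finset.range (k+1), A.indicator (fun _ => (1:ℝ)) (T^[i] (x k))) / (k+1)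
        + (∑ i ∈ Finset.range (k+1), B.indicator (fun _ => (1:ℝ)) (T^[i] (x k))) / (k+1)
    rw [← add_div, ← Finset.sum_add_distrib]
    gcongr with i hi
    exact key _
  have lam_univ : lam (univ : Set X) = 1 := by
    have hk : ∀ k, e (univ : Set X) k = 1 := by
      intro k
      show (∑ i ∈ Finset.range (k+1), (univ : Set X).indicator (fun _ => (1:ℝ)) (T^[i] (x k))) / (k+1) = 1
      rw [Set.indicator_univ]
      simp only [Pi.one_apply, Finset.sum_const, Finset.card_range, nsmul_eq_mul, mul_one]
      push_cast
      rw [div_self (by positivity)]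
    refine tendsto_nhds_unique (lam_tendsto univ) ?_
    rw [tendsto_congr hk]
    exact tendsto_const_nhds
  have lam_preimage : ∀ A : Set X, lam (T ⁻¹' A) = lam A := by
    intro A
    have key : ∀ k, |e (T ⁻¹' A) k - e A k| ≤ 2 / (k+1) := by
      intro k
      have h1 : e (T ⁻¹' A) k = ((∑ i ∈ Finset.range (k+1),
          A.indicator (fun _ => (1:ℝ)) (T^[i] (x k)))
          + A.indicator (fun _ => (1:ℝ)) (T^[k+1] (x k))
          - A.indicator (fun _ => (1:ℝ)) (x k)) / (k+1) := by
        show (∑ i ∈ Finset.range (k+1), (T ⁻¹' A).indicator (fun _ => (1:ℝ)) (T^[i] (x k))) / (k+1) = _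
        congr 1
        have : ∀ i, (T ⁻¹' A).indicator (fun _ => (1:ℝ)) (T^[i] (x k))
            = A.indicator (fun _ => (1:ℝ)) (T^[i+1] (x k)) := by
          intro i
          rw [Function.iterate_succ_apply']
          by_cases h : T (T^[i] (x k)) ∈ A
          · rw [Set.indicator_of_mem (Set.mem_preimage.mpr h), Set.indicator_of_mem h]
          · rw [Set.indicator_of_notMem (fun hc => h (Set.mem_preimage.mp hc)),
              Set.indicator_of_notMem h]
        rw [Finset.sum_congr rfl fun i _ => this i]
        have h2 := Finset.sum_range_succ (fun i => A.indicator (fun _ => (1:ℝ)) (T^[i] (x k))) (k+1)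
        have h3 := Finset.sum_range_succ' (fun i => A.indicator (fun _ => (1:ℝ)) (T^[i] (x k))) (k+1)
        rw [h2] at h3
        simp only [Function.iterate_zero_apply] at h3
        linarith
      rw [h1]
      have hAk : e A k = (∑ i ∈ Finset.range (k+1), A.indicator (fun _ => (1:ℝ)) (T^[i] (x k))) / (k+1) := rfl
      rw [hAk, div_sub_div_same]
      have hk1 : (0:ℝ) < (k:ℝ) + 1 := by positivity
      rw [abs_div, abs_of_pos hk1]
      gcongr
      have e1 := ind_nonneg A (T^[k+1] (x k))
      have e2 := ind_le_one A (T^[k+1] (x k))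
      have e3 := ind_nonneg A (x k)
      have e4 := ind_le_one A (x k)
      have hsimp : (∑ i ∈ Finset.range (k + 1), A.indicator (fun _ => (1:ℝ)) (T^[i] (x k))
            + A.indicator (fun _ => (1:ℝ)) (T^[k + 1] (x k))
            - A.indicator (fun _ => (1:ℝ)) (x k))
          - ∑ i ∈ Finset.range (k + 1), A.indicator (fun _ => (1:ℝ)) (T^[i] (x k))
          = A.indicator (fun _ => (1:ℝ)) (T^[k + 1] (x k))
            - A.indicator (fun _ => (1:ℝ)) (x k) := by ring
      rw [hsimp, abs_le]
      constructor <;> linarith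
    have hz : Tendsto (fun k => e (T ⁻¹' A) k - e A k) atTop (𝓝 0) := by
      refine squeeze_zero_norm key ?_
      have h2 : Tendsto (fun k : ℕ => ((k:ℝ)+1)) atTop atTop :=
        tendsto_atTop_add_const_right _ 1 tendsto_natCast_atTop_atTop
      simpa using (tendsto_const_nhds (x := (2:ℝ))).div_atTop h2
    have hz' : Tendsto (fun k => e (T ⁻¹' A) k - e A k) U (𝓝 0) := hz.mono_left hUle
    have : Tendsto (e (T ⁻¹' A)) U (𝓝 (lam A + 0)) := by
      have := (lam_tendsto A).add hz'
      simpa using this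
    refine tendsto_nhds_unique (lam_tendsto (T ⁻¹' A)) (by simpa using this)
  -- nonempty index types for the infima
  have hne : ∀ K : TopologicalSpace.Compacts X,
      Nonempty {G : Opens X // (K : Set X) ⊆ (G : Set X)} :=
    fun K => ⟨⟨⊤, subset_univ _⟩⟩
  -- the NNReal-valued version of lam
  set lamN : Set X → ℝ≥0 := fun A => Real.toNNReal (lam A) with hlamN
  have lamN_coe : ∀ A, ((lamN A : ℝ≥0) : ℝ) = lam A :=
    fun A => Real.coe_toNNReal _ (lam_nonneg A)
  have lamN_mono : ∀ A B : Set X, A ⊆ B → lamN A ≤ lamN B :=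
    fun A B h => Real.toNNReal_mono (lam_mono A B h)
  have lamN_union : ∀ A B : Set X, Disjoint A B → lamN (A ∪ B) = lamN A + lamN B := by
    intro A B h
    show Real.toNNReal (lam (A ∪ B)) = Real.toNNReal (lam A) + Real.toNNReal (lam B)
    rw [lam_union A B h, Real.toNNReal_add (lam_nonneg A) (lam_nonneg B)]
  have lamN_subadd : ∀ A B : Set X, lamN (A ∪ B) ≤ lamN A + lamN B := by
    intro A B
    show Real.toNNReal (lam (A ∪ B)) ≤ Real.toNNReal (lam A) + Real.toNNReal (lam B)
    refine (Real.toNNReal_mono (lam_subadd A B)).trans ?_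
    exact Real.toNNReal_add_le
  -- the content induced by lam
  haveI := hne
  set C : Content X :=
    { toFun := fun K => ⨅ G : {G : Opens X // (K : Set X) ⊆ (G : Set X)}, lamN (G : Set X)
      mono' := by
        intro K₁ K₂ h
        haveI := hne K₁; haveI := hne K₂
        refine le_ciInf fun G => ?_
        exact ciInf_le_of_le (OrderBot.bddBelow _) ⟨G.1, h.trans G.2⟩ le_rfl
      sup_disjoint' := by
        intro K₁ K₂ hdis _ _
        haveI := hne K₁; haveI := hne K₂; haveI := hne (K₁ ⊔ K₂)
        refine le_antisymm ?_ ?_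
        · refine NNReal.le_iInf_add_iInf fun G₁ G₂ => ?_
          refine ciInf_le_of_le (OrderBot.bddBelow _)
            ⟨G₁.1 ⊔ G₂.1, ?_⟩ (lamN_subadd _ _)
          exact union_subset_union G₁.2 G₂.2
        · obtain ⟨U₁, U₂, hU₁, hU₂, hKU₁, hKU₂, hUdis⟩ :=
            SeparatedNhds.of_isCompact_isCompact K₁.isCompact K₂.isCompact hdis
          refine le_ciInf fun G => ?_
          have h1 : lamN ((G : Set X) ∩ U₁) + lamN ((G : Set X) ∩ U₂) ≤ lamN (G : Set X) := by
            rw [← lamN_union _ _ (hUdis.mono inter_subset_right inter_subset_right)]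
            exact lamN_mono _ _ (union_subset inter_subset_left inter_subset_left)
          refine le_trans (add_le_add ?_ ?_) h1
          · exact ciInf_le_of_le (OrderBot.bddBelow _)
              ⟨⟨(G : Set X) ∩ U₁, G.1.isOpen.inter hU₁⟩,
                subset_inter ((subset_union_left).trans G.2) hKU₁⟩ le_rfl
          · exact ciInf_le_of_le (OrderBot.bddBelow _)
              ⟨⟨(G : Set X) ∩ U₂, G.1.isOpen.inter hU₂⟩,
                subset_inter ((subset_union_right).trans G.2) hKU₂⟩ le_rfl
      sup_le' := by
        intro K₁ K₂
        haveI := hne K₁; haveI := hne K₂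
        refine NNReal.le_iInf_add_iInf fun G₁ G₂ => ?_
        refine ciInf_le_of_le (OrderBot.bddBelow _)
          ⟨G₁.1 ⊔ G₂.1, union_subset_union G₁.2 G₂.2⟩ (lamN_subadd _ _) }
    with hCdef
  have C_le : ∀ (K : TopologicalSpace.Compacts X) (G : Opens X), (K : Set X) ⊆ (G : Set X) →
      C K ≤ (lamN (G : Set X) : ℝ≥0∞) := by
    intro K G hKG
    haveI := hne K
    rw [show C K = ((⨅ G : {G : Opens X // (K : Set X) ⊆ (G : Set X)},
        lamN (G : Set X) : ℝ≥0) : ℝ≥0∞) from rfl]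
    exact ENNReal.coe_le_coe.mpr (ciInf_le (OrderBot.bddBelow _) (⟨G, hKG⟩ : {G : Opens X // (K : Set X) ⊆ (G : Set X)}))
  have le_C : ∀ (K : TopologicalSpace.Compacts X) (a : ℝ≥0),
      (∀ G : Opens X, (K : Set X) ⊆ (G : Set X) → a ≤ lamN (G : Set X)) →
      (a : ℝ≥0∞) ≤ C K := by
    intro K a ha
    haveI := hne K
    rw [show C K = ((⨅ G : {G : Opens X // (K : Set X) ⊆ (G : Set X)},
        lamN (G : Set X) : ℝ≥0) : ℝ≥0∞) from rfl]
    exact ENNReal.coe_le_coe.mpr (le_ciInf fun G => ha G.1 G.2)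
  have lamN_le_C : ∀ K : TopologicalSpace.Compacts X, (lamN (K : Set X) : ℝ≥0∞) ≤ C K :=
    fun K => le_C K _ fun G hKG => lamN_mono _ _ hKG
  -- the measure induced by the content
  set mu : Measure X := C.measure with hmu
  haveI : mu.OuterRegular := Content.outerRegular C
  have hC_top : C (⊤ : TopologicalSpace.Compacts X) = (1 : ℝ≥0∞) := by
    have hlamN_univ : lamN univ = 1 := by
      show Real.toNNReal (lam univ) = 1
      rw [lam_univ]; simp
    refine le_antisymm ?_ ?_
    · refine (C_le ⊤ ⊤ (subset_univ _)).trans ?_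
      rw [show ((⊤ : Opens X) : Set X) = univ from rfl, hlamN_univ]
      simp
    · rw [show (1 : ℝ≥0∞) = ((1 : ℝ≥0) : ℝ≥0∞) by simp]
      refine le_C ⊤ 1 fun G hG => ?_
      have : (G : Set X) = univ := eq_univ_of_univ_subset hG
      rw [this, hlamN_univ]
  have hmu_univ : mu univ = 1 := by
    rw [Content.measure_apply C MeasurableSet.univ]
    refine le_antisymm ?_ ?_
    · have := C.outerMeasure_le ⊤ ⊤ (subset_univ _)
      rw [hC_top] at this
      simpa using this
    · have := C.le_outerMeasure_compacts ⊤
      rw [hC_top] at this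
      simpa using this
  haveI hmuprob : IsProbabilityMeasure mu := ⟨hmu_univ⟩
  -- closed sets: lam is below mu
  have key1 : ∀ F : Set X, IsClosed F → lam F ≤ (mu F).toReal := by
    intro F hF
    have hF_comp : IsCompact F := hF.isCompact
    have h1 : (lamN F : ℝ≥0∞) ≤ mu F := by
      rw [Content.measure_apply C hF.measurableSet]
      exact (lamN_le_C ⟨F, hF_comp⟩).trans (C.le_outerMeasure_compacts ⟨F, hF_comp⟩)
    have h2 : mu F ≠ ∞ := measure_ne_top mu F
    have := ENNReal.toReal_mono h2 h1
    rwa [ENNReal.coe_toReal, lamN_coe] at this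
  -- closed sets: preimage measure is smaller
  have key2 : ∀ F : Set X, IsClosed F → mu (T ⁻¹' F) ≤ mu F := by
    intro F hF
    have hFm : MeasurableSet F := hF.measurableSet
    rw [Content.measure_apply C (hFm.preimage hT.measurable),
      Content.measure_apply C hFm]
    haveI := hne ⟨F, hF.isCompact⟩
    have step : ∀ G : Opens X, (F : Set X) ⊆ (G : Set X) →
        C.outerMeasure (T ⁻¹' F) ≤ (lamN (G : Set X) : ℝ≥0∞) := by
      intro G hFG
      have h1 : C.outerMeasure (T ⁻¹' F) ≤ C.outerMeasure (T ⁻¹' (G : Set X)) :=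
        measure_mono (preimage_mono hFG)
      have h2 : C.outerMeasure (T ⁻¹' (G : Set X))
          = C.innerContent ⟨T ⁻¹' (G : Set X), G.isOpen.preimage hT⟩ :=
        C.outerMeasure_of_isOpen _ (G.isOpen.preimage hT)
      have h3 : C.innerContent ⟨T ⁻¹' (G : Set X), G.isOpen.preimage hT⟩
          ≤ (lamN (T ⁻¹' (G : Set X)) : ℝ≥0∞) := by
        refine iSup₂_le fun K hK => ?_
        exact C_le K ⟨T ⁻¹' (G : Set X), G.isOpen.preimage hT⟩ hK
      have h4 : lamN (T ⁻¹' (G : Set X)) = lamN (G : Set X) := by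
        show Real.toNNReal (lam (T ⁻¹' (G : Set X))) = Real.toNNReal (lam (G : Set X))
        rw [lam_preimage]
      calc C.outerMeasure (T ⁻¹' F) ≤ _ := h1
        _ = _ := h2
        _ ≤ _ := h3
        _ = _ := by rw [h4]
    have hfin : C.outerMeasure (T ⁻¹' F)
        ≤ ((⨅ G : {G : Opens X // (F : Set X) ⊆ (G : Set X)}, lamN (G : Set X) : ℝ≥0) : ℝ≥0∞) := by
      rw [ENNReal.coe_iInf]
      exact le_iInf fun G => step G.1 G.2
    refine hfin.trans ?_
    have : ((⨅ G : {G : Opens X // (F : Set X) ⊆ (G : Set X)}, lamN (G : Set X) : ℝ≥0) : ℝ≥0∞)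
        = C ⟨F, hF.isCompact⟩ := rfl
    rw [this]
    exact C.le_outerMeasure_compacts ⟨F, hF.isCompact⟩
  -- open sets: preimage measure is bigger
  have key3 : ∀ G : Set X, IsOpen G → mu G ≤ mu (T ⁻¹' G) := by
    intro G hG
    rw [Content.measure_apply C hG.measurableSet,
      Content.measure_apply C (hG.measurableSet.preimage hT.measurable)]
    rw [C.outerMeasure_of_isOpen G hG]
    refine iSup₂_le fun K hK => ?_
    obtain ⟨V, hVopen, hKV, hVG⟩ :=
      normal_exists_closure_subset K.isCompact.isClosed hG hK
    have hK' : IsCompact (closure V) := isClosed_closure.isCompact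
    have c1 : C K ≤ (lamN V : ℝ≥0∞) := C_le K ⟨V, hVopen⟩ hKV
    have c2 : lamN V ≤ lamN (closure V) := lamN_mono _ _ subset_closure
    have c3 : lamN (closure V) = lamN (T ⁻¹' closure V) := by
      show Real.toNNReal (lam (closure V)) = Real.toNNReal (lam (T ⁻¹' closure V))
      rw [lam_preimage]
    have hTK' : IsCompact (T ⁻¹' closure V) := (isClosed_closure.preimage hT).isCompact
    have c4 : (lamN (T ⁻¹' closure V) : ℝ≥0∞) ≤ C ⟨T ⁻¹' closure V, hTK'⟩ :=
      lamN_le_C ⟨T ⁻¹' closure V, hTK'⟩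
    have c5 : C ⟨T ⁻¹' closure V, hTK'⟩ ≤ C.outerMeasure (T ⁻¹' G) := by
      rw [C.outerMeasure_of_isOpen _ (hG.preimage hT)]
      exact C.le_innerContent ⟨T ⁻¹' closure V, hTK'⟩ ⟨T ⁻¹' G, hG.preimage hT⟩
        (show T ⁻¹' closure V ⊆ T ⁻¹' G from preimage_mono hVG)
    calc C K ≤ (lamN V : ℝ≥0∞) := c1
      _ ≤ (lamN (closure V) : ℝ≥0∞) := ENNReal.coe_le_coe.mpr c2
      _ = (lamN (T ⁻¹' closure V) : ℝ≥0∞) := by rw [c3]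
      _ ≤ C ⟨T ⁻¹' closure V, hTK'⟩ := c4
      _ ≤ C.outerMeasure (T ⁻¹' G) := c5
  -- invariance of mu
  have hinv : ∀ S : Set X, MeasurableSet S → mu (T ⁻¹' S) = mu S := by
    intro S hS
    set nu : Measure X := Measure.map T mu with hnu
    haveI : IsProbabilityMeasure nu := Measure.isProbabilityMeasure_map hT.measurable.aemeasurable
    have hnu_apply : ∀ A : Set X, MeasurableSet A → nu A = mu (T ⁻¹' A) :=
      fun A hA => Measure.map_apply hT.measurable hA
    have hle : mu S ≤ nu S := by
      rw [Set.measure_eq_iInf_isOpen S nu]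
      refine le_iInf fun V => le_iInf fun hSV => le_iInf fun hVo => ?_
      calc mu S ≤ mu V := measure_mono hSV
        _ ≤ mu (T ⁻¹' V) := key3 V hVo
        _ = nu V := (hnu_apply V hVo.measurableSet).symm
    have hge : nu S ≤ mu S := by
      rw [MeasurableSet.measure_eq_iSup_isClosed_of_ne_top hS (measure_ne_top nu S)]
      refine iSup₂_le fun F hFS => iSup_le fun hF => ?_
      calc nu F = mu (T ⁻¹' F) := hnu_apply F hF.measurableSet
        _ ≤ mu F := key2 F hF
        _ ≤ mu S := measure_mono hFS
    rw [← hnu_apply S hS]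
    exact le_antisymm hge hle
  have hIntNeg : ∫ y, φ y ∂mu < 0 := hneg mu hmuprob hinv
  -- φ is integrable
  have hφint : Integrable φ mu :=
    hφ.integrable_of_hasCompactSupport (isClosed_tsupport φ).isCompact
  -- the main estimate: for every h > 0, -h ≤ ∫ φ dmu
  have main : ∀ h : ℝ, 0 < h → -h ≤ ∫ y, φ y ∂mu := by
    intro h hh
    set m : ℕ := ⌊2*M/h⌋₊ + 1 with hm
    set idx : X → ℕ := fun y => ⌊(φ y + M)/h⌋₊ with hidx
    have idx_le : ∀ y, idx y ≤ m - 1 := by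
      intro y
      have h1 : (φ y + M)/h ≤ 2*M/h := by
        have := abs_le.mp (hφM y)
        gcongr
        linarith [this.2]
      have : idx y ≤ ⌊2*M/h⌋₊ := Nat.floor_mono h1
      omega
    set F : ℕ → Set X := fun i => {y | (i:ℕ) ≤ idx y} with hF
    have F_closed : ∀ i : ℕ, IsClosed (F i) := by
      intro i
      have : F i = φ ⁻¹' (Ici (-M + h*i)) := by
        ext y
        simp only [hF, mem_setOf_eq, mem_preimage, mem_Ici]
        rw [hidx]
        simp only
        have hy0 : (0:ℝ) ≤ (φ y + M)/h :=
          div_nonneg (by linarith [(abs_le.mp (hφM y)).1]) hh.le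
        rw [Nat.le_floor_iff hy0, le_div_iff₀ hh]
        constructor <;> intro hyp <;> nlinarith
      rw [this]
      exact IsClosed.preimage hφ isClosed_Ici
    -- counting identity
    have count : ∀ y : X, (idx y : ℝ)
        = ∑ j ∈ Finset.range (m-1), (F (j+1)).indicator (fun _ => (1:ℝ)) y := by
      intro y
      have hterm : ∀ j : ℕ, (F (j+1)).indicator (fun _ => (1:ℝ)) y
          = if j + 1 ≤ idx y then (1:ℝ) else 0 := by
        intro j
        by_cases hj : j + 1 ≤ idx y
        · rw [Set.indicator_of_mem (show y ∈ F (j+1) from hj), if_pos hj]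
        · rw [Set.indicator_of_notMem (show y ∉ F (j+1) from hj), if_neg hj]
      rw [Finset.sum_congr rfl fun j _ => hterm j, Finset.sum_boole]
      have : Finset.filter (fun j => j + 1 ≤ idx y) (Finset.range (m-1))
          = Finset.range (idx y) := by
        ext j
        simp only [Finset.mem_filter, Finset.mem_range]
        have := idx_le y
        omega
      rw [this]
      simp
    -- pointwise bounds
    have lower : ∀ y, -M + h * (idx y : ℝ) ≤ φ y := by
      intro y
      have h1 := Nat.floor_le (show (0:ℝ) ≤ (φ y + M)/h from
        div_nonneg (by linarith [(abs_le.mp (hφM y)).1]) hh.le)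
      have h2 : (idx y : ℝ) * h ≤ φ y + M := by
        rw [← le_div_iff₀ hh]
        exact h1
      linarith
    have upper : ∀ y, φ y ≤ -M + h * (idx y : ℝ) + h := by
      intro y
      have h1 := Nat.lt_floor_add_one ((φ y + M)/h)
      have h2 : φ y + M < ((idx y : ℝ) + 1) * h := by
        rw [← div_lt_iff₀ hh]
        exact_mod_cast h1
      nlinarith
    -- empirical inequality for every k
    have emp : ∀ k : ℕ, 0 ≤ -M + h + h * ∑ j ∈ Finset.range (m-1), e (F (j+1)) k := by
      intro k
      have h0 : 0 ≤ (∑ i ∈ Finset.range (k+1), φ (T^[i] (x k))) / (k+1) :=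
        div_nonneg (hx k) (by positivity)
      have hpt : ∀ i : ℕ, φ (T^[i] (x k)) ≤ (-M + h)
          + h * ∑ j ∈ Finset.range (m-1), (F (j+1)).indicator (fun _ => (1:ℝ)) (T^[i] (x k)) := by
        intro i
        rw [← count (T^[i] (x k))]
        have := upper (T^[i] (x k))
        linarith
      have hsum2 : ∑ i ∈ Finset.range (k+1), φ (T^[i] (x k))
          ≤ ∑ i ∈ Finset.range (k+1), ((-M + h)
            + h * ∑ j ∈ Finset.range (m-1), (F (j+1)).indicator (fun _ => (1:ℝ)) (T^[i] (x k))) :=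
        Finset.sum_le_sum fun i _ => hpt i
      have hswap : ∑ i ∈ Finset.range (k+1), ((-M + h)
            + h * ∑ j ∈ Finset.range (m-1), (F (j+1)).indicator (fun _ => (1:ℝ)) (T^[i] (x k)))
          = ((k:ℝ)+1) * (-M + h) + h * ∑ j ∈ Finset.range (m-1),
              ∑ i ∈ Finset.range (k+1), (F (j+1)).indicator (fun _ => (1:ℝ)) (T^[i] (x k)) := by
        rw [Finset.sum_add_distrib, Finset.sum_const, Finset.card_range, ← Finset.mul_sum,
          Finset.sum_comm]
        push_cast
        ring
      have hdiv : (∑ i ∈ Finset.range (k+1), φ (T^[i] (x k))) / (k+1)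
          ≤ -M + h + h * ∑ j ∈ Finset.range (m-1), e (F (j+1)) k := by
        have hk1 : (0:ℝ) < (k:ℝ) + 1 := by positivity
        have step1 : (∑ i ∈ Finset.range (k+1), φ (T^[i] (x k))) / (k+1)
            ≤ (((k:ℝ)+1) * (-M + h) + h * ∑ j ∈ Finset.range (m-1),
              ∑ i ∈ Finset.range (k+1), (F (j+1)).indicator (fun _ => (1:ℝ)) (T^[i] (x k))) / ((k:ℝ)+1) := by
          rw [← hswap]
          gcongr
        refine step1.trans_eq ?_
        have hE : ∀ j : ℕ, e (F (j+1)) k = (∑ i ∈ Finset.range (k+1),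
            (F (j+1)).indicator (fun _ => (1:ℝ)) (T^[i] (x k))) / ((k:ℝ)+1) := fun j => rfl
        rw [Finset.sum_congr rfl fun j _ => hE j, ← Finset.sum_div]
        field_simp
      linarith
    -- pass to the limit along the ultrafilter
    have hlim : Tendsto (fun k => -M + h + h * ∑ j ∈ Finset.range (m-1), e (F (j+1)) k) U
        (𝓝 (-M + h + h * ∑ j ∈ Finset.range (m-1), lam (F (j+1)))) := by
      refine Tendsto.add tendsto_const_nhds (Tendsto.const_mul _ ?_)
      exact tendsto_finset_sum _ fun j _ => lam_tendsto (F (j+1))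
    have hpos : 0 ≤ -M + h + h * ∑ j ∈ Finset.range (m-1), lam (F (j+1)) :=
      ge_of_tendsto' hlim emp
    -- compare lam with mu on the closed sets F (j+1)
    have hcomp : ∑ j ∈ Finset.range (m-1), lam (F (j+1))
        ≤ ∑ j ∈ Finset.range (m-1), (mu (F (j+1))).toReal :=
      Finset.sum_le_sum fun j _ => key1 _ (F_closed _)
    -- lower bound for the integral
    have hFm : ∀ j : ℕ, MeasurableSet (F (j+1)) := fun j => (F_closed (j+1)).measurableSet
    have hψint : Integrable (fun y => -M
        + h * ∑ j ∈ Finset.range (m-1), (F (j+1)).indicator (fun _ => (1:ℝ)) y) mu := by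
      refine (integrable_const (-M)).add (Integrable.const_mul ?_ h)
      exact integrable_finset_sum _ fun j _ => (integrable_const (1:ℝ)).indicator (hFm j)
    have hintlow : -M + h * ∑ j ∈ Finset.range (m-1), (mu (F (j+1))).toReal
        ≤ ∫ y, φ y ∂mu := by
      have hmono : ∀ y, -M
          + h * ∑ j ∈ Finset.range (m-1), (F (j+1)).indicator (fun _ => (1:ℝ)) y ≤ φ y := by
        intro y
        rw [← count y]
        exact lower y
      have hle := integral_mono hψint hφint hmono
      have hcalc : ∫ y, (-M
          + h * ∑ j ∈ Finset.range (m-1), (F (j+1)).indicator (fun _ => (1:ℝ)) y) ∂mu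
          = -M + h * ∑ j ∈ Finset.range (m-1), (mu (F (j+1))).toReal := by
        rw [integral_add (integrable_const (-M))
          (Integrable.const_mul (integrable_finset_sum _
            fun j _ => (integrable_const (1:ℝ)).indicator (hFm j)) h)]
        rw [integral_const, integral_const_mul]
        rw [integral_finset_sum _ fun j _ => (integrable_const (1:ℝ)).indicator (hFm j)]
        have : ∀ j : ℕ, ∫ y, (F (j+1)).indicator (fun _ => (1:ℝ)) y ∂mu
            = (mu (F (j+1))).toReal := by
          intro j
          rw [integral_indicator_const (1:ℝ) (hFm j)]
          simp [Measure.real]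
        rw [Finset.sum_congr rfl fun j _ => this j]
        simp [measure_univ]
      rw [← hcalc]
      exact hle
    have hmul : h * ∑ j ∈ Finset.range (m-1), lam (F (j+1))
        ≤ h * ∑ j ∈ Finset.range (m-1), (mu (F (j+1))).toReal :=
      mul_le_mul_of_nonneg_left hcomp hh.le
    linarith
  -- conclude : the integral is nonnegative, contradiction
  have hfinal : 0 ≤ ∫ y, φ y ∂mu := by
    by_contra hneg2
    push_neg at hneg2
    have := main (-(∫ y, φ y ∂mu)/2) (by linarith)
    linarith
  linarith

/-- If a continuous function `φ` on a compact metric space has negative integral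
with respect to every `T`-invariant Borel probability measure, then its Birkhoff
sums are uniformly exponentially negative: there are `ε > 0` and `N` such that
`∑_{i<n} φ(Tⁱ x) ≤ -ε n` for all `x` and all `n ≥ N`. -/
theorem uniformly_negative_birkhoff_sums
    (X : Type*) [MetricSpace X] [CompactSpace X] [Nonempty X]
    [MeasurableSpace X] [BorelSpace X]
    (T : X → X) (hT : Continuous T)
    (φ : X → ℝ) (hφ : Continuous φ)
    (hneg : ∀ μ : Measure X, IsProbabilityMeasure μ →
      (∀ S : Set X, MeasurableSet S → μ (T ⁻¹' S) = μ S) →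
      ∫ x, φ x ∂μ < 0) :
    ∃ ε > (0 : ℝ), ∃ N : ℕ, ∀ x : X, ∀ n : ℕ, N ≤ n →
      ∑ i ∈ Finset.range n, φ (T^[i] x) ≤ -(ε * n) := by
  obtain ⟨m, hm, hneg'⟩ := exists_neg_birkhoff X T hT φ hφ hneg
  -- a bound for φ
  obtain ⟨z, -, hz⟩ := isCompact_univ.exists_isMaxOn univ_nonempty
    (continuous_abs.comp hφ).continuousOn
  rw [isMaxOn_iff] at hz
  set M : ℝ := |φ z| + 1 with hM
  have hMpos : 0 < M := by positivity
  have hφM : ∀ y, |φ y| ≤ M := fun y => (hz y (mem_univ y)).trans (by simp [hM])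
  -- the maximum of the m-th Birkhoff sum is some -c < 0
  have hSm_cont : Continuous (fun y => ∑ i ∈ Finset.range m, φ (T^[i] y)) :=
    continuous_finset_sum _ fun i _ => hφ.comp (hT.iterate i)
  obtain ⟨w, -, hw⟩ := isCompact_univ.exists_isMaxOn univ_nonempty hSm_cont.continuousOn
  rw [isMaxOn_iff] at hw
  set c : ℝ := -(∑ i ∈ Finset.range m, φ (T^[i] w)) with hc
  have hcpos : 0 < c := by
    have := hneg' w
    simp only [hc]
    linarith
  have hblock : ∀ y : X, ∑ i ∈ Finset.range m, φ (T^[i] y) ≤ -c := by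
    intro y
    have := hw y (mem_univ y)
    simp only [hc]
    linarith [this]
  -- Birkhoff sums over q blocks of length m
  have hq : ∀ (q : ℕ) (y : X), birkhoffSum T φ (m*q) y ≤ -c * q := by
    intro q
    induction q with
    | zero => simp [birkhoffSum]
    | succ q ih =>
      intro y
      have : m * (q+1) = m*q + m := by ring
      rw [this, birkhoffSum_add]
      have h1 := ih y
      have h2 : birkhoffSum T φ m (T^[m*q] y) ≤ -c := hblock _
      push_cast
      linarith
  -- choice of ε and N
  refine ⟨c/(2*m), by positivity, ⌈(2*m*(c+m*M))/c⌉₊, ?_⟩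
  intro y n hn
  have hmR : (0:ℝ) < (m:ℝ) := by exact_mod_cast hm
  have hnR : (2*(m:ℝ)*(c+(m:ℝ)*M))/c ≤ (n:ℝ) := by
    have := Nat.ceil_le.mp hn
    exact this
  set q : ℕ := n / m with hqdef
  set r : ℕ := n % m with hrdef
  have hnmr : m * q + r = n := Nat.div_add_mod n m
  have hrm : r < m := Nat.mod_lt _ hm
  clear_value M c q r
  -- split the sum
  have hsplit : ∑ i ∈ Finset.range n, φ (T^[i] y)
      = birkhoffSum T φ (m*q) y + birkhoffSum T φ r (T^[m*q] y) := by
    rw [← birkhoffSum_add]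
    rw [hnmr]
    rfl
  have hrest : birkhoffSum T φ r (T^[m*q] y) ≤ (m:ℝ) * M := by
    have h1 : birkhoffSum T φ r (T^[m*q] y) ≤ ∑ i ∈ Finset.range r, M :=
      Finset.sum_le_sum fun i _ => (le_abs_self _).trans (hφM _)
    rw [Finset.sum_const, Finset.card_range, nsmul_eq_mul] at h1
    have h2 : (r:ℝ) ≤ (m:ℝ) := by exact_mod_cast hrm.le
    nlinarith [hMpos]
  have hmain := hq q y
  rw [hsplit]
  -- arithmetic
  have hcast : (m:ℝ) * (q:ℝ) + (r:ℝ) = (n:ℝ) := by exact_mod_cast hnmr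
  have hrR : (r:ℝ) ≤ (m:ℝ) := by exact_mod_cast hrm.le
  have hqq : (m:ℝ)*(q:ℝ) ≥ (n:ℝ) - (m:ℝ) := by linarith
  have hmul : c * (n:ℝ) ≥ 2*(m:ℝ)*(c+(m:ℝ)*M) := by
    rw [ge_iff_le, ← div_le_iff₀' hcpos]
    calc 2*(m:ℝ)*(c+(m:ℝ)*M)/c = (2*(m:ℝ)*(c+(m:ℝ)*M))/c := by ring
      _ ≤ (n:ℝ) := hnR
  have e1 : c * ((m:ℝ)*(q:ℝ)) ≥ c * ((n:ℝ) - (m:ℝ)) :=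
    mul_le_mul_of_nonneg_left hqq hcpos.le
  have key : c/(2*(m:ℝ)) * (n:ℝ) ≤ c*(q:ℝ) - (m:ℝ)*M := by
    rw [div_mul_eq_mul_div, div_le_iff₀ (by positivity : (0:ℝ) < 2*(m:ℝ))]
    nlinarith
  linarith
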